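/- Let α ≥ 0, β > 0, s = α + β, and let v = v_s(u₀) be defined implicitly by u₀² = (1/v)(1+v)(s−v−v²), v > 0 (Cauchy case). Define u = f(u₀) = u₀ + ((α−β)/s)·u₀ v/(1+v). Then du/du₀ = ((1+v)(s² + 4αv²(1+v)) − (α−β)s v) / (s(1+v)(s + 2v²(1+v))). -/

import Mathlib

open Real

noncomputable def gcc (s : ℝ) : ℝ → ℝ := fun w => 1 / w * (1 + w) * (s - w - w ^ 2)

lemma gcc_lt {s w₁ w₂ : ℝ} (hs : 0 < s) (h1 : 0 < w₁) (h2 : 0 < w₂) (h : w₁ < w₂) :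
    gcc s w₂ < gcc s w₁ := by
  have key : gcc s w₁ - gcc s w₂ = ((w₂ - w₁) * (s + w₁ * w₂ * (2 + w₁ + w₂))) / (w₁ * w₂) := by
    unfold gcc; field_simp; ring
  have hpos : 0 < gcc s w₁ - gcc s w₂ := by
    rw [key]
    apply div_pos
    · apply mul_pos (by linarith)
      nlinarith [mul_pos (mul_pos h1 h2) (by linarith : (0:ℝ) < 2 + w₁ + w₂)]
    · positivity
  linarith

lemma gcc_inj {s w₁ w₂ : ℝ} (hs : 0 < s) (h1 : 0 < w₁) (h2 : 0 < w₂)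
    (h : gcc s w₁ = gcc s w₂) : w₁ = w₂ := by
  rcases lt_trichotomy w₁ w₂ with hlt | heq | hgt
  · exact absurd h (ne_of_gt (gcc_lt hs h1 h2 hlt))
  · exact heq
  · exact absurd h (ne_of_lt (gcc_lt hs h2 h1 hgt))

lemma gcc_exists {s : ℝ} (hs : 0 < s) (t : ℝ) : ∃ w, 0 < w ∧ gcc s w = t := by
  set a : ℝ := min 1 (s / (|t| + 4)) with ha_def
  set b : ℝ := max 1 (2 * s + |t|) with hb_def
  have ha0 : 0 < a := lt_min one_pos (by positivity)
  have ha1 : a ≤ 1 := min_le_left _ _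
  have hb1 : (1:ℝ) ≤ b := le_max_left _ _
  have hb0 : 0 < b := lt_of_lt_of_le one_pos hb1
  have hab : a ≤ b := ha1.trans hb1
  have hcont : ContinuousOn (gcc s) (Set.Icc a b) := by
    apply ContinuousOn.mul
    apply ContinuousOn.mul
    · exact continuousOn_const.div continuousOn_id (fun x hx => ne_of_gt (lt_of_lt_of_le ha0 hx.1))
    · fun_prop
    · fun_prop
  have hga : gcc s a = s / a + s - 1 - 2 * a - a ^ 2 := by
    unfold gcc; field_simp; ring
  have hgb : gcc s b = s / b + s - 1 - 2 * b - b ^ 2 := by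
    unfold gcc; field_simp; ring
  have h2 : |t| + 4 ≤ s / a := by
    rw [le_div_iff₀ ha0]
    have h : a ≤ s / (|t| + 4) := min_le_right _ _
    rw [le_div_iff₀ (by positivity)] at h
    linarith
  have hta : t ≤ gcc s a := by
    rw [hga]
    have h3 : t ≤ |t| := le_abs_self t
    nlinarith
  have htb : gcc s b ≤ t := by
    rw [hgb]
    have h4 : s / b ≤ s := div_le_self hs.le hb1
    have h5 : 2 * s + |t| ≤ b := le_max_right _ _
    have h6 : -|t| ≤ t := neg_abs_le t
    nlinarith
  have hmem := intermediate_value_Icc' hab hcont (Set.mem_Icc.mpr ⟨htb, hta⟩)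
  obtain ⟨w, hw, hgw⟩ := hmem
  exact ⟨w, lt_of_lt_of_le ha0 hw.1, hgw⟩

open Classical in
noncomputable def psic (s t : ℝ) : ℝ :=
  if h : ∃ w, 0 < w ∧ gcc s w = t then h.choose else 1

lemma psic_spec {s : ℝ} (hs : 0 < s) (t : ℝ) : 0 < psic s t ∧ gcc s (psic s t) = t := by
  have h := gcc_exists hs t
  rw [psic, dif_pos h]
  exact h.choose_spec

lemma psic_cont {s : ℝ} (hs : 0 < s) (t : ℝ) : ContinuousAt (psic s) t := by
  rw [Metric.continuousAt_iff]
  intro ε hε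
  set c := psic s t with hc_def
  have hc : 0 < c := (psic_spec hs t).1
  have hgc : gcc s c = t := (psic_spec hs t).2
  set ε' : ℝ := min ε (c / 2) with hε'_def
  have hε' : 0 < ε' := lt_min hε (by linarith)
  have hε'c : ε' ≤ c / 2 := min_le_right _ _
  have hcm : 0 < c - ε' := by linarith
  have h1 : t < gcc s (c - ε') := hgc ▸ gcc_lt hs hcm hc (by linarith)
  have h2 : gcc s (c + ε') < t := hgc ▸ gcc_lt hs hc (by linarith) (by linarith)
  refine ⟨min (gcc s (c - ε') - t) (t - gcc s (c + ε')), lt_min (by linarith) (by linarith), ?_⟩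
  intro y hy
  rw [Real.dist_eq] at hy ⊢
  have hy1 : y < gcc s (c - ε') := by
    have h := abs_lt.mp (lt_of_lt_of_le hy (min_le_left _ _))
    linarith [h.2]
  have hy2 : gcc s (c + ε') < y := by
    have h := abs_lt.mp (lt_of_lt_of_le hy (min_le_right _ _))
    linarith [h.1]
  set w := psic s y with hw_def
  have hw : 0 < w := (psic_spec hs y).1
  have hgw : gcc s w = y := (psic_spec hs y).2
  have hlow : c - ε' < w := by
    by_contra hcon
    push_neg at hcon
    rcases eq_or_lt_of_le hcon with heq | hlt
    · rw [heq] at hgw; linarith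
    · have h := gcc_lt hs hw hcm hlt; linarith
  have hhigh : w < c + ε' := by
    by_contra hcon
    push_neg at hcon
    rcases eq_or_lt_of_le hcon with heq | hlt
    · rw [← heq] at hgw; linarith
    · have h := gcc_lt hs (by linarith : (0:ℝ) < c + ε') hw hlt; linarith
  have habs : |w - c| < ε' := abs_lt.mpr ⟨by linarith, by linarith⟩
  exact lt_of_lt_of_le habs (min_le_left _ _)

lemma gcc_hasDerivAt {s c : ℝ} (hc : 0 < c) :
    HasDerivAt (gcc s) (-(s / c ^ 2) - 2 - 2 * c) c := by
  have h1 : HasDerivAt (fun w : ℝ => 1 / w) (-(1 / c ^ 2)) c := by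
    simpa [one_div] using hasDerivAt_inv hc.ne'
  have h2 : HasDerivAt (fun w : ℝ => 1 + w) 1 c := by
    simpa using (hasDerivAt_id c).const_add 1
  have h3 : HasDerivAt (fun w : ℝ => s - w - w ^ 2) (0 - 1 - 2 * c ^ 1) c :=
    (((hasDerivAt_const c s).sub (hasDerivAt_id c))).sub (by simpa using hasDerivAt_pow 2 c)
  have h : HasDerivAt (gcc s)
      ((-(1 / c ^ 2) * (1 + c) + 1 / c * 1) * (s - c - c ^ 2) + 1 / c * (1 + c) * (0 - 1 - 2 * c ^ 1)) c :=
    (h1.mul h2).mul h3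
  convert h using 1
  field_simp [hc.ne']
  ring

lemma psic_hasDerivAt {s : ℝ} (hs : 0 < s) (t : ℝ) :
    HasDerivAt (psic s) (-(s / (psic s t) ^ 2) - 2 - 2 * psic s t)⁻¹ t := by
  have hc : 0 < psic s t := (psic_spec hs t).1
  apply HasDerivAt.of_local_left_inverse (psic_cont hs t)
  · exact gcc_hasDerivAt hc
  · have h : 0 < s / (psic s t) ^ 2 := by positivity
    nlinarith
  · exact Filter.Eventually.of_forall fun y => (psic_spec hs y).2

set_option maxHeartbeats 1000000 in
/-- Cauchy case: with `s = α+β`, `v = v_s(u₀)` defined implicitly by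
`u₀² = (1/v)(1+v)(s−v−v²)`, and `u = f(u₀) = u₀ + ((α−β)/s) u₀ v/(1+v)`, one has
`du/du₀ = ((1+v)(s² + 4αv²(1+v)) − (α−β)s v)/(s(1+v)(s + 2v²(1+v)))`. -/
theorem cauchy_f_deriv (α β s : ℝ) (hα : 0 ≤ α) (hβ : 0 < β) (hs : s = α + β)
    (v f : ℝ → ℝ)
    (hpos : ∀ u₀, 0 < v u₀)
    (himp : ∀ u₀ : ℝ, u₀ ^ 2 = (1 / v u₀) * (1 + v u₀) * (s - v u₀ - (v u₀) ^ 2))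
    (hf : ∀ u₀ : ℝ, f u₀ = u₀ + ((α - β) / s) * (u₀ * v u₀ / (1 + v u₀))) :
    ∀ u₀ : ℝ, HasDerivAt f
      (((1 + v u₀) * (s ^ 2 + 4 * α * (v u₀) ^ 2 * (1 + v u₀)) - (α - β) * s * v u₀) /
        (s * (1 + v u₀) * (s + 2 * (v u₀) ^ 2 * (1 + v u₀)))) u₀ := by
  have hs' : 0 < s := by linarith
  have hveq : ∀ y : ℝ, v y = psic s (y ^ 2) := by
    intro y
    apply gcc_inj hs' (hpos y) (psic_spec hs' (y ^ 2)).1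
    rw [(psic_spec hs' (y ^ 2)).2]
    exact (himp y).symm
  intro u₀
  have hc : 0 < v u₀ := hpos u₀
  have h1c : (0:ℝ) < 1 + v u₀ := by linarith
  set c := v u₀ with hc_def
  set D : ℝ := -(s / c ^ 2) - 2 - 2 * c with hD_def
  have hD : D < 0 := by
    have h : 0 < s / c ^ 2 := by positivity
    rw [hD_def]; nlinarith
  have hv : HasDerivAt v (D⁻¹ * (2 * u₀ ^ 1)) u₀ := by
    have hpsi := (psic_hasDerivAt hs' (u₀ ^ 2)).comp u₀ (hasDerivAt_pow 2 u₀)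
    have hcc : psic s (u₀ ^ 2) = c := (hveq u₀).symm
    rw [hcc] at hpsi
    have hfun : v = fun y => psic s (y ^ 2) := funext hveq
    rw [hfun]
    exact hpsi
  have hffun : f = fun y => y + (α - β) / s * (y * v y / (1 + v y)) := funext hf
  have hden : (1 : ℝ) + v u₀ ≠ 0 := by positivity
  have hnum : HasDerivAt (fun y => y * v y) (1 * c + u₀ * (D⁻¹ * (2 * u₀ ^ 1))) u₀ :=
    (hasDerivAt_id u₀).mul hv
  have hdenom : HasDerivAt (fun y => 1 + v y) (D⁻¹ * (2 * u₀ ^ 1)) u₀ := hv.const_add 1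
  have hdiv := hnum.div hdenom hden
  have hfin := (hasDerivAt_id u₀).add (hdiv.const_mul ((α - β) / s))
  have hfin2 : HasDerivAt f (1 + (α - β) / s *
      (((1 * c + u₀ * (D⁻¹ * (2 * u₀ ^ 1))) * (1 + v u₀) - u₀ * v u₀ * (D⁻¹ * (2 * u₀ ^ 1))) /
        (1 + v u₀) ^ 2)) u₀ := by
    rw [hffun]; exact hfin
  convert hfin2 using 1
  have hrel : u₀ ^ 2 = (1 + c) * (s - c - c ^ 2) / c := by
    rw [himp u₀]; ring
  have hDval : D = -(s + 2 * c ^ 2 + 2 * c ^ 3) / c ^ 2 := by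
    rw [hD_def]; field_simp; ring
  have hSpos : (0:ℝ) < s + 2 * c ^ 2 + 2 * c ^ 3 := by positivity
  have hSne : s + 2 * c ^ 2 + 2 * c ^ 3 ≠ 0 := ne_of_gt hSpos
  have hcne : c ≠ 0 := hc.ne'
  have h1cne : (1:ℝ) + c ≠ 0 := h1c.ne'
  have hkey : (1 * c + u₀ * (D⁻¹ * (2 * u₀ ^ 1))) * (1 + v u₀) - u₀ * v u₀ * (D⁻¹ * (2 * u₀ ^ 1))
      = c * (1 + c) + 2 * u₀ ^ 2 * D⁻¹ := by
    show (1 * c + u₀ * (D⁻¹ * (2 * u₀ ^ 1))) * (1 + c) - u₀ * c * (D⁻¹ * (2 * u₀ ^ 1))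
      = c * (1 + c) + 2 * u₀ ^ 2 * D⁻¹
    ring
  rw [hkey]
  have hq : 2 * u₀ ^ 2 * D⁻¹ =
      -2 * c * (1 + c) * (s - c - c ^ 2) / (s + 2 * c ^ 2 + 2 * c ^ 3) := by
    have hSne' : -(s + 2 * c ^ 2 + 2 * c ^ 3) ≠ 0 := neg_ne_zero.mpr hSne
    rw [hrel, hDval, inv_div, div_neg]
    field_simp [hcne, hSne]
  rw [hq]
  subst hs
  have hsne : α + β ≠ 0 := by positivity
  field_simp
  ring
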